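/- The number of involutions of {1,...,n} avoiding both 3412 and 123 equals 1 + ⌊n/2⌋·⌈n/2⌉. -/

import Mathlib

def Av3412 {n : ℕ} (σ : Equiv.Perm (Fin n)) : Prop :=
  ¬ ∃ i j k l : Fin n, i < j ∧ j < k ∧ k < l ∧ σ k < σ l ∧ σ l < σ i ∧ σ i < σ j

def Av123 {n : ℕ} (σ : Equiv.Perm (Fin n)) : Prop :=
  ¬ ∃ i j k : Fin n, i < j ∧ j < k ∧ σ i < σ j ∧ σ j < σ k

namespace AvProof


def rev2fun (n c : ℕ) (hc : c < n) (i : Fin n) : Fin n :=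
  if h : i.1 ≤ c then ⟨c - i.1, by omega⟩ else ⟨n + c - i.1, by have := i.2; omega⟩

lemma rev2fun_inv (n c : ℕ) (hc : c < n) : Function.Involutive (rev2fun n c hc) := by
  intro i
  have := i.2
  apply Fin.ext
  simp only [rev2fun]
  split_ifs with h1 h2 h3
  · simp only [Fin.val_mk] at h2 ⊢; omega
  · simp only [Fin.val_mk] at h2 ⊢; omega
  · simp only [Fin.val_mk] at h3 ⊢; omega
  · simp only [Fin.val_mk] at h3 ⊢; omega

def rev2 (n c : ℕ) (hc : c < n) : Equiv.Perm (Fin n) :=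
  (rev2fun_inv n c hc).toPerm

lemma rev2_val (n c : ℕ) (hc : c < n) (i : Fin n) :
    (rev2 n c hc i).1 = if i.1 ≤ c then c - i.1 else n + c - i.1 := by
  simp only [rev2, Function.Involutive.toPerm, Equiv.coe_fn_mk, rev2fun]
  split_ifs <;> rfl

lemma rev2_mul (n c : ℕ) (hc : c < n) : rev2 n c hc * rev2 n c hc = 1 := by
  ext i
  exact congrArg Fin.val (rev2fun_inv n c hc i)

lemma rev2_av123 (n c : ℕ) (hc : c < n) : Av123 (rev2 n c hc) := by
  rintro ⟨i, j, k, hij, hjk, h1, h2⟩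
  rw [Fin.lt_def] at hij hjk h1 h2
  simp only [rev2_val] at h1 h2
  have := i.2; have := j.2; have := k.2
  split_ifs at h1 h2 <;> omega

lemma rev2_av3412 (n c : ℕ) (hc : c < n) : Av3412 (rev2 n c hc) := by
  rintro ⟨i, j, k, l, hij, hjk, hkl, h1, h2, h3⟩
  rw [Fin.lt_def] at hij hjk hkl h1 h2 h3
  simp only [rev2_val] at h1 h2 h3
  have := i.2; have := j.2; have := k.2; have := l.2
  split_ifs at h1 h2 h3 <;> omega



lemma chain {g : ℕ → ℕ} {a b : ℕ} (h : ∀ p q, a ≤ p → p < q → q ≤ b → g q < g p) :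
    ∀ m p, a ≤ p → p + m ≤ b → g (p + m) + m ≤ g p := by
  intro m
  induction m with
  | zero => intro p _ _; simp
  | succ k ih =>
      intro p hp hpb
      have h1 := ih p hp (by omega)
      have h2 := h (p + k) (p + k + 1) (by omega) (by omega) (by omega)
      have h3 : p + (k + 1) = p + k + 1 := by omega
      rw [h3]
      omega

lemma classify {n : ℕ} (τ : Equiv.Perm (Fin n)) (hinv : τ * τ = 1)
    (h4 : Av3412 τ) (h3 : Av123 τ) (c : ℕ) (hc : c + 1 < n)
    (h0 : (τ ⟨0, by omega⟩).1 = c) :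
    ∀ i : Fin n, (τ i).1 = if i.1 ≤ c then c - i.1 else n + c - i.1 := by
  have hn : 0 < n := by omega
  have happ : ∀ i, τ (τ i) = i := by
    intro i
    have := congrArg (fun σ => σ i) hinv
    simpa [Equiv.Perm.mul_apply] using this
  set z : Fin n := ⟨0, hn⟩ with hz
  set C : Fin n := ⟨c, by omega⟩ with hC
  set L : Fin n := ⟨n - 1, by omega⟩ with hL
  have hzC : τ z = C := Fin.ext h0
  have hCz : τ C = z := by rw [← hzC, happ]
  set d : Fin n := τ L with hd
  have hdL : τ d = L := happ L
  have hinj : ∀ p q : Fin n, p ≠ q → τ p ≠ τ q := by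
    intro p q hpq h
    exact hpq (τ.injective h)
  -- step 1 : values on [0,c] stay in [0,c]
  have step1 : ∀ i : Fin n, i.1 ≤ c → (τ i).1 ≤ c := by
    intro i hi
    by_contra hgt
    push_neg at hgt
    have hi0 : 0 < i.1 := by
      by_contra h
      have hiz : i = z := Fin.ext (by simp only [hz, Fin.val_mk]; omega)
      rw [hiz, hzC] at hgt
      simp only [hC, Fin.val_mk] at hgt
      omega
    have hiC : i.1 < c := by
      rcases Nat.lt_or_ge i.1 c with h | h
      · exact h
      · exfalso
        have hiC' : i = C := Fin.ext (by simp only [hC, Fin.val_mk]; omega)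
        rw [hiC', hCz] at hgt
        simp only [hz, Fin.val_mk] at hgt
        omega
    rcases lt_trichotomy i.1 d.1 with hcase | hcase | hcase
    · -- 123 at (z, i, d)
      refine h3 ⟨z, i, d, ?_, ?_, ?_, ?_⟩
      · show z.1 < i.1; simp only [hz, Fin.val_mk]; omega
      · exact hcase
      · rw [Fin.lt_def, hzC]; simp only [hC, Fin.val_mk]; exact hgt
      · rw [Fin.lt_def, hdL]
        have hne : τ i ≠ L := by
          rw [← hdL]; exact hinj i d (Fin.ne_of_lt hcase)
        have hb : (τ i).1 < n := (τ i).2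
        have hb2 : (τ i).1 ≠ n - 1 := fun h =>
          hne (Fin.ext (by simp only [hL, Fin.val_mk]; omega))
        simp only [hL, Fin.val_mk]
        omega
    · -- τ i = L, 3412 at (z, i, C, L)
      have hid : i = d := Fin.ext hcase
      refine h4 ⟨z, i, C, L, ?_, ?_, ?_, ?_, ?_, ?_⟩
      · show z.1 < i.1; simp only [hz, Fin.val_mk]; omega
      · show i.1 < C.1; simp only [hC, Fin.val_mk]; omega
      · show C.1 < L.1; simp only [hC, hL, Fin.val_mk]; omega
      · rw [Fin.lt_def, hCz, ← hd]
        simp only [hz, Fin.val_mk]; omega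
      · rw [Fin.lt_def, hzC, ← hd]
        simp only [hC, Fin.val_mk]; omega
      · rw [Fin.lt_def, hzC, hid, hdL]
        simp only [hC, hL, Fin.val_mk]; omega
    · -- d < i, 3412 at (z, d, C, L)
      have hd0 : 0 < d.1 := by
        by_contra h
        have hdz : d = z := Fin.ext (by simp only [hz, Fin.val_mk]; omega)
        rw [hdz, hzC] at hdL
        have := congrArg Fin.val hdL
        simp only [hC, hL, Fin.val_mk] at this
        omega
      refine h4 ⟨z, d, C, L, ?_, ?_, ?_, ?_, ?_, ?_⟩
      · show z.1 < d.1; simp only [hz, Fin.val_mk]; omega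
      · show d.1 < C.1; simp only [hC, Fin.val_mk]; omega
      · show C.1 < L.1; simp only [hC, hL, Fin.val_mk]; omega
      · rw [Fin.lt_def, hCz, ← hd]
        simp only [hz, Fin.val_mk]; omega
      · rw [Fin.lt_def, hzC, ← hd]
        simp only [hC, Fin.val_mk]; omega
      · rw [Fin.lt_def, hzC, hdL]
        simp only [hC, hL, Fin.val_mk]; omega
  have compl : ∀ i : Fin n, c < i.1 → c < (τ i).1 := by
    intro i hi
    by_contra hle
    push_neg at hle
    have := step1 (τ i) hle
    rw [happ] at this
    omega
  have hcd : c < d.1 := by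
    have := compl L (by simp only [hL, Fin.val_mk]; omega)
    rw [← hd] at this
    exact this
  -- strictly decreasing on [0, c]
  have step2 : ∀ p q : Fin n, p.1 < q.1 → q.1 ≤ c → (τ q).1 < (τ p).1 := by
    intro p q hpq hq
    by_contra hle
    push_neg at hle
    have hne : τ p ≠ τ q := hinj p q (Fin.ne_of_lt hpq)
    have hlt : (τ p).1 < (τ q).1 := by
      rcases Nat.lt_or_ge (τ p).1 (τ q).1 with h | h
      · exact h
      · exact absurd (Fin.ext (by omega) : τ p = τ q) hne
    refine h3 ⟨p, q, d, hpq, ?_, hlt, ?_⟩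
    · show q.1 < d.1; omega
    · rw [Fin.lt_def, hdL]
      have h5 := step1 q hq
      simp only [hL, Fin.val_mk]
      omega
  -- strictly decreasing on (c, n)
  have step3 : ∀ p q : Fin n, c < p.1 → p.1 < q.1 → (τ q).1 < (τ p).1 := by
    intro p q hp hpq
    by_contra hle
    push_neg at hle
    have hne : τ p ≠ τ q := hinj p q (Fin.ne_of_lt hpq)
    have hlt : (τ p).1 < (τ q).1 := by
      rcases Nat.lt_or_ge (τ p).1 (τ q).1 with h | h
      · exact h
      · exact absurd (Fin.ext (by omega) : τ p = τ q) hne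
    refine h3 ⟨z, p, q, ?_, hpq, ?_, hlt⟩
    · show z.1 < p.1; simp only [hz, Fin.val_mk]; omega
    · rw [Fin.lt_def, hzC]
      have := compl p hp
      simp only [hC, Fin.val_mk]
      omega
  -- pin down values via chains
  set g : ℕ → ℕ := fun i => if h : i < n then (τ ⟨i, h⟩).1 else 0 with hg
  have gval : ∀ (i : Fin n), g i.1 = (τ i).1 := by
    intro i
    simp only [hg]
    rw [dif_pos i.2]
  have glow : ∀ p q, 0 ≤ p → p < q → q ≤ c → g q < g p := by
    intro p q _ hpq hq
    have hp' : p < n := by omega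
    have hq' : q < n := by omega
    have h5 := step2 ⟨p, hp'⟩ ⟨q, hq'⟩ hpq hq
    simp only [hg]
    rw [dif_pos hq', dif_pos hp']
    exact h5
  have ghigh : ∀ p q, c + 1 ≤ p → p < q → q ≤ n - 1 → g q < g p := by
    intro p q hp hpq hq
    have hp' : p < n := by omega
    have hq' : q < n := by omega
    have h5 := step3 ⟨p, hp'⟩ ⟨q, hq'⟩ (by simp only [Fin.val_mk]; omega) hpq
    simp only [hg]
    rw [dif_pos hq', dif_pos hp']
    exact h5
  have g0 : g 0 = c := by
    have h5 := gval z
    rw [hzC] at h5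
    simp only [hz, hC, Fin.val_mk] at h5
    exact h5
  have gc : g c = 0 := by
    have h5 := gval C
    rw [hCz] at h5
    simp only [hz, hC, Fin.val_mk] at h5
    exact h5
  have glast : c + 1 ≤ g (n - 1) := by
    have h5 := compl L (by simp only [hL, Fin.val_mk]; omega)
    have h6 := gval L
    simp only [hL, Fin.val_mk] at h5 h6
    omega
  have gc1 : g (c + 1) ≤ n - 1 := by
    have hlt : c + 1 < n := by omega
    have h6 := gval ⟨c + 1, hlt⟩
    have h7 := (τ (⟨c + 1, hlt⟩ : Fin n)).2
    simp only [Fin.val_mk] at h6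
    omega
  intro i
  rw [← gval i]
  have hi := i.2
  split_ifs with h
  · have hA := chain glow (c - i.1) i.1 (by omega) (by omega)
    have hB := chain glow i.1 0 (by omega) (by omega)
    rw [show i.1 + (c - i.1) = c by omega] at hA
    rw [show 0 + i.1 = i.1 by omega] at hB
    omega
  · have hA := chain ghigh (n - 1 - i.1) i.1 (by omega) (by omega)
    have hB := chain ghigh (i.1 - (c + 1)) (c + 1) (by omega) (by omega)
    rw [show i.1 + (n - 1 - i.1) = n - 1 by omega] at hA
    rw [show c + 1 + (i.1 - (c + 1)) = i.1 by omega] at hB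
    omega



variable {n : ℕ}

def embF (i : Fin n) : Fin (n + 2) := ⟨i.1 + 1, by have := i.2; omega⟩

def framefun (σ : Equiv.Perm (Fin n)) (i : Fin (n + 2)) : Fin (n + 2) :=
  if h0 : i.1 = 0 then ⟨n + 1, by omega⟩
  else if hl : i.1 = n + 1 then ⟨0, by omega⟩
  else embF (σ ⟨i.1 - 1, by have := i.2; omega⟩)

lemma framefun_zero (σ : Equiv.Perm (Fin n)) (i : Fin (n + 2)) (h : i.1 = 0) :
    framefun σ i = ⟨n + 1, by omega⟩ := by rw [framefun, dif_pos h]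

lemma framefun_last (σ : Equiv.Perm (Fin n)) (i : Fin (n + 2)) (h : i.1 = n + 1) :
    framefun σ i = ⟨0, by omega⟩ := by
  rw [framefun, dif_neg (by omega), dif_pos h]

lemma framefun_mid (σ : Equiv.Perm (Fin n)) (i : Fin (n + 2)) (h1 : i.1 ≠ 0) (h2 : i.1 ≠ n + 1) :
    framefun σ i = embF (σ ⟨i.1 - 1, by have := i.2; omega⟩) := by
  rw [framefun, dif_neg h1, dif_neg h2]

lemma framefun_emb (σ : Equiv.Perm (Fin n)) (j : Fin n) :
    framefun σ (embF j) = embF (σ j) := by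
  have hj := j.2
  rw [framefun_mid σ (embF j) (by simp [embF]) (by simp [embF]; omega)]
  congr 2

lemma framefun_inv (σ : Equiv.Perm (Fin n)) (hσ : σ * σ = 1) :
    Function.Involutive (framefun σ) := by
  have happ : ∀ i, σ (σ i) = i := by
    intro i
    have := congrArg (fun ρ => ρ i) hσ
    simpa [Equiv.Perm.mul_apply] using this
  intro i
  have hi2 := i.2
  by_cases h0 : i.1 = 0
  · rw [framefun_zero σ i h0, framefun_last σ _ (by simp)]
    exact (Fin.ext h0.symm)
  · by_cases hl : i.1 = n + 1
    · rw [framefun_last σ i hl, framefun_zero σ _ (by simp)]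
      exact (Fin.ext hl.symm)
    · rw [framefun_mid σ i h0 hl, framefun_emb, happ]
      apply Fin.ext
      simp [embF]
      omega

def frame (σ : Equiv.Perm (Fin n)) (hσ : σ * σ = 1) : Equiv.Perm (Fin (n + 2)) :=
  (framefun_inv σ hσ).toPerm

lemma frame_apply (σ : Equiv.Perm (Fin n)) (hσ : σ * σ = 1) (i : Fin (n + 2)) :
    frame σ hσ i = framefun σ i := rfl

lemma frame_mul (σ : Equiv.Perm (Fin n)) (hσ : σ * σ = 1) :
    frame σ hσ * frame σ hσ = 1 := by
  ext i
  exact congrArg Fin.val (framefun_inv σ hσ i)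

section Res

lemma happ2 (τ : Equiv.Perm (Fin (n + 2))) (hτ : τ * τ = 1) : ∀ i, τ (τ i) = i := by
  intro i
  have := congrArg (fun ρ => ρ i) hτ
  simpa [Equiv.Perm.mul_apply] using this

lemma tau_last (τ : Equiv.Perm (Fin (n + 2))) (hτ : τ * τ = 1)
    (h0 : (τ ⟨0, by omega⟩).1 = n + 1) : (τ ⟨n + 1, by omega⟩).1 = 0 := by
  have h1 : τ ⟨0, by omega⟩ = ⟨n + 1, by omega⟩ := Fin.ext (by simp only [Fin.val_mk]; omega)
  have h4 := (congrArg τ h1).symm.trans (happ2 τ hτ ⟨0, by omega⟩)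
  exact congrArg Fin.val h4

lemma mid_bounds (τ : Equiv.Perm (Fin (n + 2))) (hτ : τ * τ = 1)
    (h0 : (τ ⟨0, by omega⟩).1 = n + 1) (i : Fin n) :
    0 < (τ (embF i)).1 ∧ (τ (embF i)).1 < n + 1 := by
  have hi := i.2
  constructor
  · by_contra h
    have he : τ (embF i) = ⟨0, by omega⟩ := Fin.ext (by simp only [Fin.val_mk]; omega)
    have h2 := (happ2 τ hτ (embF i)).symm.trans (congrArg τ he)
    have hv : (embF i).1 = n + 1 := (congrArg Fin.val h2).trans h0
    simp [embF] at hv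
    omega
  · by_contra h
    have hb := (τ (embF i)).2
    have he : τ (embF i) = ⟨n + 1, by omega⟩ := Fin.ext (by simp only [Fin.val_mk]; omega)
    have h2 := (happ2 τ hτ (embF i)).symm.trans (congrArg τ he)
    have hv : (embF i).1 = 0 := (congrArg Fin.val h2).trans (tau_last τ hτ h0)
    simp [embF] at hv

def resfun (τ : Equiv.Perm (Fin (n + 2))) (hτ : τ * τ = 1)
    (h0 : (τ ⟨0, by omega⟩).1 = n + 1) (i : Fin n) : Fin n :=
  ⟨(τ (embF i)).1 - 1, by have := (mid_bounds τ hτ h0 i).2; have := i.2; omega⟩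

lemma emb_resfun (τ : Equiv.Perm (Fin (n + 2))) (hτ : τ * τ = 1)
    (h0 : (τ ⟨0, by omega⟩).1 = n + 1) (i : Fin n) :
    embF (resfun τ hτ h0 i) = τ (embF i) := by
  have hb := mid_bounds τ hτ h0 i
  apply Fin.ext
  simp only [embF, resfun, Fin.val_mk] at hb ⊢
  omega

lemma resfun_inv (τ : Equiv.Perm (Fin (n + 2))) (hτ : τ * τ = 1)
    (h0 : (τ ⟨0, by omega⟩).1 = n + 1) : Function.Involutive (resfun τ hτ h0) := by
  intro i
  have h1 := emb_resfun τ hτ h0 i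
  have h3 : τ (embF (resfun τ hτ h0 i)) = embF i := by rw [h1]; exact happ2 τ hτ _
  apply Fin.ext
  show (τ (embF (resfun τ hτ h0 i))).1 - 1 = i.1
  rw [h3]
  simp [embF]

def res (τ : Equiv.Perm (Fin (n + 2))) (hτ : τ * τ = 1)
    (h0 : (τ ⟨0, by omega⟩).1 = n + 1) : Equiv.Perm (Fin n) :=
  (resfun_inv τ hτ h0).toPerm

lemma res_mul (τ : Equiv.Perm (Fin (n + 2))) (hτ : τ * τ = 1)
    (h0 : (τ ⟨0, by omega⟩).1 = n + 1) : res τ hτ h0 * res τ hτ h0 = 1 := by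
  ext i
  exact congrArg Fin.val (resfun_inv τ hτ h0 i)

lemma frame_res (τ : Equiv.Perm (Fin (n + 2))) (hτ : τ * τ = 1)
    (h0 : (τ ⟨0, by omega⟩).1 = n + 1) :
    frame (res τ hτ h0) (res_mul τ hτ h0) = τ := by
  apply Equiv.ext
  intro i
  have hi2 := i.2
  rw [frame_apply]
  by_cases hz : i.1 = 0
  · rw [framefun_zero _ i hz]
    have hiz : i = (⟨0, by omega⟩ : Fin (n + 2)) := Fin.ext (by simp only [Fin.val_mk]; omega)
    rw [hiz]
    exact (Fin.ext (by simp only [Fin.val_mk]; omega)).symm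
  · by_cases hl : i.1 = n + 1
    · rw [framefun_last _ i hl]
      have hil : i = (⟨n + 1, by omega⟩ : Fin (n + 2)) := Fin.ext (by simp only [Fin.val_mk]; omega)
      rw [hil]
      have := tau_last τ hτ h0
      exact (Fin.ext (by simp only [Fin.val_mk]; omega)).symm
    · rw [framefun_mid _ i hz hl]
      rw [show (res τ hτ h0) ⟨i.1 - 1, by omega⟩ = resfun τ hτ h0 ⟨i.1 - 1, by omega⟩ from rfl]
      rw [emb_resfun]
      congr 1
      apply Fin.ext
      simp [embF]
      omega

lemma res_frame (σ : Equiv.Perm (Fin n)) (hσ : σ * σ = 1)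
    (h0' : ((frame σ hσ) ⟨0, by omega⟩).1 = n + 1) :
    res (frame σ hσ) (frame_mul σ hσ) h0' = σ := by
  apply Equiv.ext
  intro i
  rw [show (res (frame σ hσ) (frame_mul σ hσ) h0') i
      = resfun (frame σ hσ) (frame_mul σ hσ) h0' i from rfl]
  apply Fin.ext
  simp only [resfun]
  rw [frame_apply, framefun_emb]
  simp [embF]

lemma av123_frame_iff (σ : Equiv.Perm (Fin n)) (hσ : σ * σ = 1) :
    Av123 (frame σ hσ) ↔ Av123 σ := by
  rw [Av123, Av123, not_iff_not]
  constructor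
  · rintro ⟨i, j, k, hij, hjk, h1, h2⟩
    rw [Fin.lt_def] at hij hjk h1 h2
    rw [frame_apply] at h1 h2
    rw [frame_apply] at h1 h2
    have hi2 := i.2; have hj2 := j.2; have hk2 := k.2
    -- rule out boundary indices
    have hiz : i.1 ≠ 0 := by
      intro h
      rw [framefun_zero σ i h] at h1
      have := (framefun σ j).2
      simp only [Fin.val_mk] at h1
      omega
    have hkl : k.1 ≠ n + 1 := by
      intro h
      rw [framefun_last σ k h] at h2
      simp only [Fin.val_mk] at h2
      omega
    have hjz : j.1 ≠ 0 := by omega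
    have hjl : j.1 ≠ n + 1 := by omega
    have hil : i.1 ≠ n + 1 := by omega
    have hkz : k.1 ≠ 0 := by omega
    rw [framefun_mid σ i hiz hil, framefun_mid σ j hjz hjl] at h1
    rw [framefun_mid σ j hjz hjl, framefun_mid σ k hkz hkl] at h2
    simp only [embF, Fin.val_mk] at h1 h2
    refine ⟨⟨i.1 - 1, by omega⟩, ⟨j.1 - 1, by omega⟩, ⟨k.1 - 1, by omega⟩, ?_, ?_, ?_, ?_⟩
    · show i.1 - 1 < j.1 - 1; omega
    · show j.1 - 1 < k.1 - 1; omega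
    · rw [Fin.lt_def]; omega
    · rw [Fin.lt_def]; omega
  · rintro ⟨i, j, k, hij, hjk, h1, h2⟩
    refine ⟨embF i, embF j, embF k, ?_, ?_, ?_, ?_⟩
    · show (embF i).1 < (embF j).1
      simp only [embF, Fin.val_mk]
      exact Nat.add_lt_add_right hij 1
    · show (embF j).1 < (embF k).1
      simp only [embF, Fin.val_mk]
      exact Nat.add_lt_add_right hjk 1
    · rw [Fin.lt_def, frame_apply, frame_apply, framefun_emb, framefun_emb]
      simp only [embF, Fin.val_mk]
      exact Nat.add_lt_add_right h1 1
    · rw [Fin.lt_def, frame_apply, frame_apply, framefun_emb, framefun_emb]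
      simp only [embF, Fin.val_mk]
      exact Nat.add_lt_add_right h2 1

lemma av3412_frame_iff (σ : Equiv.Perm (Fin n)) (hσ : σ * σ = 1) :
    Av3412 (frame σ hσ) ↔ Av3412 σ := by
  rw [Av3412, Av3412, not_iff_not]
  constructor
  · rintro ⟨i, j, k, l, hij, hjk, hkl, h1, h2, h3⟩
    rw [Fin.lt_def] at hij hjk hkl h1 h2 h3
    rw [frame_apply] at h1 h2 h3
    rw [frame_apply] at h1 h2 h3
    have hi2 := i.2; have hj2 := j.2; have hk2 := k.2; have hl2 := l.2
    have hiz : i.1 ≠ 0 := by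
      intro h
      rw [framefun_zero σ i h] at h3
      have := (framefun σ j).2
      simp only [Fin.val_mk] at h3
      omega
    have hll : l.1 ≠ n + 1 := by
      intro h
      rw [framefun_last σ l h] at h1
      simp only [Fin.val_mk] at h1
      omega
    have hjz : j.1 ≠ 0 := by omega
    have hkz : k.1 ≠ 0 := by omega
    have hlz : l.1 ≠ 0 := by omega
    have hil : i.1 ≠ n + 1 := by omega
    have hjl : j.1 ≠ n + 1 := by omega
    have hkl' : k.1 ≠ n + 1 := by omega
    rw [framefun_mid σ k hkz hkl', framefun_mid σ l hlz hll] at h1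
    rw [framefun_mid σ l hlz hll, framefun_mid σ i hiz hil] at h2
    rw [framefun_mid σ i hiz hil, framefun_mid σ j hjz hjl] at h3
    simp only [embF, Fin.val_mk] at h1 h2 h3
    refine ⟨⟨i.1 - 1, by omega⟩, ⟨j.1 - 1, by omega⟩, ⟨k.1 - 1, by omega⟩, ⟨l.1 - 1, by omega⟩,
      ?_, ?_, ?_, ?_, ?_, ?_⟩
    · show i.1 - 1 < j.1 - 1; omega
    · show j.1 - 1 < k.1 - 1; omega
    · show k.1 - 1 < l.1 - 1; omega
    · rw [Fin.lt_def]; omega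
    · rw [Fin.lt_def]; omega
    · rw [Fin.lt_def]; omega
  · rintro ⟨i, j, k, l, hij, hjk, hkl, h1, h2, h3⟩
    refine ⟨embF i, embF j, embF k, embF l, ?_, ?_, ?_, ?_, ?_, ?_⟩
    · show (embF i).1 < (embF j).1
      simp only [embF, Fin.val_mk]
      exact Nat.add_lt_add_right hij 1
    · show (embF j).1 < (embF k).1
      simp only [embF, Fin.val_mk]
      exact Nat.add_lt_add_right hjk 1
    · show (embF k).1 < (embF l).1
      simp only [embF, Fin.val_mk]
      exact Nat.add_lt_add_right hkl 1
    · rw [Fin.lt_def, frame_apply, frame_apply, framefun_emb, framefun_emb]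
      simp only [embF, Fin.val_mk]
      exact Nat.add_lt_add_right h1 1
    · rw [Fin.lt_def, frame_apply, frame_apply, framefun_emb, framefun_emb]
      simp only [embF, Fin.val_mk]
      exact Nat.add_lt_add_right h2 1
    · rw [Fin.lt_def, frame_apply, frame_apply, framefun_emb, framefun_emb]
      simp only [embF, Fin.val_mk]
      exact Nat.add_lt_add_right h3 1

end Res


abbrev S (n : ℕ) := {τ : Equiv.Perm (Fin n) // τ * τ = 1 ∧ Av3412 τ ∧ Av123 τ}

lemma card_step (n : ℕ) : Nat.card (S (n + 2)) = Nat.card (S n) + (n + 1) := by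
  classical
  set P : S (n + 2) → Prop := fun x => (x.1 ⟨0, by omega⟩).1 = n + 1 with hP
  have e1 : S (n + 2) ≃ ({x : S (n + 2) // P x} ⊕ {x : S (n + 2) // ¬ P x}) :=
    (Equiv.sumCompl P).symm
  have eA : {x : S (n + 2) // P x} ≃ S n :=
    { toFun := fun x =>
        ⟨res x.1.1 x.1.2.1 x.2, res_mul _ _ _,
          by
            have h := (av3412_frame_iff (res x.1.1 x.1.2.1 x.2) (res_mul _ _ _)).1
            rw [frame_res] at h
            exact h x.1.2.2.1,
          by
            have h := (av123_frame_iff (res x.1.1 x.1.2.1 x.2) (res_mul _ _ _)).1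
            rw [frame_res] at h
            exact h x.1.2.2.2⟩
      invFun := fun y =>
        ⟨⟨frame y.1 y.2.1, frame_mul _ _,
          (av3412_frame_iff _ _).2 y.2.2.1, (av123_frame_iff _ _).2 y.2.2.2⟩,
          by
            show ((frame y.1 y.2.1) ⟨0, by omega⟩).1 = n + 1
            rw [frame_apply, framefun_zero _ _ rfl]⟩
      left_inv := fun x => by
        apply Subtype.ext
        apply Subtype.ext
        exact frame_res x.1.1 x.1.2.1 x.2
      right_inv := fun y => by
        apply Subtype.ext
        exact res_frame y.1 y.2.1 _ }
  have eB : {x : S (n + 2) // ¬ P x} ≃ Fin (n + 1) :=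
    { toFun := fun x =>
        ⟨(x.1.1 ⟨0, by omega⟩).1, by
          have h1 := (x.1.1 ⟨0, by omega⟩).2
          have h2 : ¬ ((x.1.1 ⟨0, by omega⟩).1 = n + 1) := x.2
          omega⟩
      invFun := fun c =>
        ⟨⟨rev2 (n + 2) c.1 (by have := c.2; omega), rev2_mul _ _ _,
          rev2_av3412 _ _ _, rev2_av123 _ _ _⟩,
          by
            show ¬ ((rev2 (n + 2) c.1 _ ⟨0, by omega⟩).1 = n + 1)
            rw [rev2_val]
            have := c.2
            simp
            omega⟩
      left_inv := fun x => by
        apply Subtype.ext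
        apply Subtype.ext
        have hc2 : (x.1.1 ⟨0, by omega⟩).1 + 1 < n + 2 := by
          have h1 := (x.1.1 ⟨0, by omega⟩).2
          have h2 : ¬ ((x.1.1 ⟨0, by omega⟩).1 = n + 1) := x.2
          omega
        have hcl := classify x.1.1 x.1.2.1 x.1.2.2.1 x.1.2.2.2
          ((x.1.1 ⟨0, by omega⟩).1) hc2 rfl
        apply Equiv.ext
        intro i
        apply Fin.ext
        rw [rev2_val, hcl i]
      right_inv := fun c => by
        apply Fin.ext
        show (rev2 (n + 2) c.1 (by have := c.2; omega) ⟨0, by omega⟩).1 = c.1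
        rw [rev2_val]
        simp }
  rw [Nat.card_congr (e1.trans (eA.sumCongr eB)), Nat.card_sum]
  have hf : Nat.card (Fin (n + 1)) = n + 1 := by simp
  rw [hf]

lemma base_case (n : ℕ) (hn : n ≤ 1) : Nat.card (S n) = 1 := by
  have h1 : ∀ x y : S n, x = y := by
    intro x y
    apply Subtype.ext
    apply Equiv.ext
    intro i
    apply Fin.ext
    have := (x.1 i).2
    have := (y.1 i).2
    omega
  have h2 : Nonempty (S n) := by
    refine ⟨⟨1, by simp, ?_, ?_⟩⟩
    · rintro ⟨i, j, k, l, hij, hjk, -⟩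
      have := i.2
      have := j.2
      have := k.2
      have h : i.1 < j.1 := hij
      have h' : j.1 < k.1 := hjk
      omega
    · rintro ⟨i, j, k, hij, hjk, -⟩
      have := i.2
      have := j.2
      have := k.2
      have h : i.1 < j.1 := hij
      have h' : j.1 < k.1 := hjk
      omega
  rcases h2 with ⟨x⟩
  have : Nonempty (S n ≃ Unit) := ⟨{
    toFun := fun _ => Unit.unit
    invFun := fun _ => x
    left_inv := fun y => h1 x y
    right_inv := fun _ => rfl }⟩
  rcases this with ⟨e⟩
  rw [Nat.card_congr e]
  simp

lemma main_count : ∀ n : ℕ, Nat.card (S n) = 1 + (n / 2) * ((n + 1) / 2)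
  | 0 => by rw [base_case 0 (by omega)]
  | 1 => by rw [base_case 1 (by omega)]
  | (n + 2) => by
      rw [card_step n, main_count n]
      rcases Nat.even_or_odd n with ⟨k, hk⟩ | ⟨k, hk⟩
      · subst hk
        have e1 : (k + k) / 2 = k := by omega
        have e2 : (k + k + 1) / 2 = k := by omega
        have e3 : (k + k + 2) / 2 = k + 1 := by omega
        have e4 : (k + k + 2 + 1) / 2 = k + 1 := by omega
        rw [e1, e2, e3, e4]
        ring
      · subst hk
        have e1 : (2 * k + 1) / 2 = k := by omega
        have e2 : (2 * k + 1 + 1) / 2 = k + 1 := by omega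
        have e3 : (2 * k + 1 + 2) / 2 = k + 1 := by omega
        have e4 : (2 * k + 1 + 2 + 1) / 2 = k + 2 := by omega
        rw [e1, e2, e3, e4]
        ring

end AvProof

theorem card_involutions_avoiding_3412_123 (n : ℕ) :
    Nat.card {τ : Equiv.Perm (Fin n) // τ * τ = 1 ∧ Av3412 τ ∧ Av123 τ} =
      1 + (n / 2) * ((n + 1) / 2) := AvProof.main_count n
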